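/- Let n ≥ 2 and let f : [0,∞) → ℝ be continuous with f(0) = 0, twice continuously differentiable on (0,∞) with lim_{r→0⁺} f'(r) = 0, and satisfy f''(r) = (1 + f'(r)²)(1 - (n-1)f'(r)/r) for all r > 0. Then for every ε ∈ (0, 1/n) and every r > 0 one has f'(r) > (1/n - ε)·r; in particular f'(r) > r/(2n) for all r > 0. -/

import Mathlib

open Real Filter Set

/-- Part (2) of Proposition 4.2: the bowl soliton profile `f`, solving
`f'' = (1 + f'²)(1 - (n-1) f' / r)` on `(0,∞)` with `f(0) = 0` and `f'(0⁺) = 0`,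
satisfies `f'(r) > (1/n - ε) r` for every `ε ∈ (0, 1/n)` and every `r > 0`;
in particular `f'(r) > r/(2n)` for all `r > 0`. -/
theorem bowl_profile_gradient_lower_bound (n : ℕ) (hn : 2 ≤ n) (f : ℝ → ℝ)
    (hf0 : f 0 = 0)
    (hcont : ContinuousOn f (Set.Ici 0))
    (hC2 : ContDiffOn ℝ 2 f (Set.Ioi 0))
    (hd0 : Tendsto (deriv f) (nhdsWithin 0 (Set.Ioi 0)) (nhds 0))
    (hODE : ∀ r : ℝ, 0 < r → deriv (deriv f) r =
      (1 + (deriv f r) ^ 2) * (1 - ((n : ℝ) - 1) * deriv f r / r)) :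
    (∀ ε : ℝ, 0 < ε → ε < 1 / (n : ℝ) →
      ∀ r : ℝ, 0 < r → (1 / (n : ℝ) - ε) * r < deriv f r) ∧
    (∀ r : ℝ, 0 < r → r / (2 * (n : ℝ)) < deriv f r) := by
  have hnR : (2:ℝ) ≤ (n:ℝ) := by exact_mod_cast hn
  have hnpos : (0:ℝ) < (n:ℝ) := by linarith
  -- deriv f is C¹ on (0,∞)
  have hdf_cd : ContDiffOn ℝ 1 (deriv f) (Set.Ioi 0) :=
    hC2.deriv_of_isOpen isOpen_Ioi (by norm_num)
  have hdf_cont : ContinuousOn (deriv f) (Set.Ioi 0) := hdf_cd.continuousOn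
  have hdf_diff : ∀ x : ℝ, 0 < x → DifferentiableAt ℝ (deriv f) x := fun x hx =>
    (hdf_cd.differentiableOn one_ne_zero).differentiableAt (isOpen_Ioi.mem_nhds hx)
  -- key lemma
  have key : ∀ c : ℝ, 0 < c → c < 1 / (n:ℝ) → ∀ r : ℝ, 0 < r → c * r ≤ deriv f r := by
    intro c hc0 hc1 r₁ hr₁
    by_contra hlt
    push_neg at hlt
    set m : ℝ → ℝ := fun s => deriv f s - c * s with hm_def
    have hmr₁ : m r₁ < 0 := by simp only [hm_def]; linarith
    have hnc : (n:ℝ) * c < 1 := by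
      have := (lt_div_iff₀ hnpos).mp hc1
      linarith
    have hm_cont : ContinuousOn m (Set.Ioi 0) :=
      hdf_cont.sub ((continuous_const.mul continuous_id).continuousOn)
    have hm_hasDeriv : ∀ x : ℝ, 0 < x →
        HasDerivAt m (deriv (deriv f) x - c) x := by
      intro x hx
      have h2 : HasDerivAt (fun s : ℝ => c * s) c x := by
        simpa using (hasDerivAt_id x).const_mul c
      exact ((hdf_diff x hx).hasDerivAt).sub h2
    have hderiv_pos : ∀ x : ℝ, 0 < x → m x < 0 → 0 < deriv m x := by
      intro x hx hmx
      rw [(hm_hasDeriv x hx).deriv, hODE x hx]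
      have hgx : deriv f x < c * x := by
        have := hmx; simp only [hm_def] at this; linarith
      have hq : deriv f x / x < c := (div_lt_iff₀ hx).mpr hgx
      set t := deriv f x / x with ht
      have hrw : ((n:ℝ) - 1) * deriv f x / x = ((n:ℝ) - 1) * t := by
        rw [ht, mul_div_assoc]
      rw [hrw]
      have hB : 0 < 1 - ((n:ℝ) - 1) * t := by nlinarith
      nlinarith [sq_nonneg (deriv f x), mul_nonneg (sq_nonneg (deriv f x)) hB.le]
    by_cases hZ : ∃ z, z ∈ Set.Ioc 0 r₁ ∧ 0 ≤ m z
    · obtain ⟨z, hz, hmz⟩ := hZ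
      set Z : Set ℝ := Set.Icc z r₁ ∩ m ⁻¹' (Set.Ici 0) with hZ_def
      have hZsub : Z ⊆ Set.Icc z r₁ := Set.inter_subset_left
      have hZclosed : IsClosed Z :=
        (hm_cont.mono (fun x hx => lt_of_lt_of_le hz.1 hx.1)).preimage_isClosed_of_isClosed
          isClosed_Icc isClosed_Ici
      have hZcompact : IsCompact Z := isCompact_Icc.of_isClosed_subset hZclosed hZsub
      have hZne : Z.Nonempty := ⟨z, ⟨le_rfl, hz.2⟩, hmz⟩
      set s₀ := sSup Z with hs₀_def
      have hs₀Z : s₀ ∈ Z := hZcompact.sSup_mem hZne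
      have hs₀pos : 0 < s₀ := lt_of_lt_of_le hz.1 hs₀Z.1.1
      have hms₀ : 0 ≤ m s₀ := hs₀Z.2
      have hs₀lt : s₀ < r₁ := lt_of_le_of_ne hs₀Z.1.2 (by
        intro h; rw [h] at hms₀; linarith)
      have hneg : ∀ x ∈ Set.Ioo s₀ r₁, m x < 0 := by
        intro x hx
        by_contra hge
        push_neg at hge
        have hxZ : x ∈ Z := ⟨⟨le_trans hs₀Z.1.1 hx.1.le, hx.2.le⟩, hge⟩
        have : x ≤ s₀ := le_csSup (hZcompact.bddAbove) hxZ
        linarith [hx.1]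
      have hsmo : StrictMonoOn m (Set.Icc s₀ r₁) := by
        apply strictMonoOn_of_deriv_pos (convex_Icc _ _)
        · exact hm_cont.mono (fun x hx => lt_of_lt_of_le hs₀pos hx.1)
        · intro x hx
          rw [interior_Icc] at hx
          exact hderiv_pos x (lt_trans hs₀pos hx.1) (hneg x hx)
      have := hsmo (Set.left_mem_Icc.mpr hs₀lt.le) (Set.right_mem_Icc.mpr hs₀lt.le) hs₀lt
      linarith
    · push_neg at hZ
      have hneg : ∀ x ∈ Set.Ioc 0 r₁, m x < 0 := fun x hx => hZ x hx
      have hsmo : StrictMonoOn m (Set.Ioc 0 r₁) := by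
        apply strictMonoOn_of_deriv_pos (convex_Ioc _ _)
        · exact hm_cont.mono (fun x hx => hx.1)
        · intro x hx
          rw [interior_Ioc] at hx
          exact hderiv_pos x hx.1 (hneg x ⟨hx.1, hx.2.le⟩)
      have hlim : Tendsto m (nhdsWithin 0 (Set.Ioi 0)) (nhds 0) := by
        have h2 : Tendsto (fun s : ℝ => c * s) (nhdsWithin 0 (Set.Ioi 0)) (nhds 0) := by
          have hco : Tendsto (fun s : ℝ => c * s) (nhds 0) (nhds (c * 0)) :=
            ((continuous_const.mul continuous_id).tendsto (0:ℝ))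
          rw [mul_zero] at hco
          exact hco.mono_left nhdsWithin_le_nhds
        simpa using hd0.sub h2
      have hev : ∀ᶠ s in nhdsWithin 0 (Set.Ioi 0), m s ≤ m r₁ := by
        filter_upwards [Ioo_mem_nhdsGT_of_mem (Set.left_mem_Ico.mpr hr₁)] with s hs
        exact (hsmo ⟨hs.1, hs.2.le⟩ ⟨hr₁, le_rfl⟩ hs.2).le
      have : (0:ℝ) ≤ m r₁ := le_of_tendsto hlim hev
      linarith
  constructor
  · intro ε hε0 hε1 r hr
    have h := key (1/(n:ℝ) - ε/2) (by linarith) (by linarith) r hr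
    nlinarith
  · intro r hr
    have h1 : (0:ℝ) < 1/(n:ℝ) := by positivity
    have h := key (3/(4*(n:ℝ))) (by positivity) (by
      rw [div_lt_div_iff₀ (by positivity) hnpos]; nlinarith) r hr
    have hkey : r / (2*(n:ℝ)) < 3/(4*(n:ℝ)) * r := by
      rw [div_lt_iff₀ (by positivity : (0:ℝ) < 2*(n:ℝ))]
      have heq : 3/(4*(n:ℝ)) * r * (2*(n:ℝ)) = (3/2) * r := by
        field_simp; ring
      rw [heq]; linarith
    linarith
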